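/- Let Λ be an Artinian algebra and S a faithful simple Λ-module. If Ext¹_Λ(S ⊕ Λ, S ⊕ Λ) = 0, then S is projective. -/

import Mathlib

open CategoryTheory

universe u

section Aux

variable {R : Type*} [Ring R] {M : Type*} [AddCommGroup M] [Module R M]

lemma aux_simple_isSemisimple [IsSimpleModule R M] : IsSemisimpleModule R M := by
  constructor

lemma aux_pi_isSemisimple {ι : Type*} [Finite ι] [DecidableEq ι] (φ : ι → Type*)
    [∀ i, AddCommGroup (φ i)] [∀ i, Module R (φ i)]
    [∀ i, IsSemisimpleModule R (φ i)] : IsSemisimpleModule R (∀ i, φ i) := by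
  apply isSemisimpleModule_of_isSemisimpleModule_submodule'
    (p := fun i => LinearMap.range (LinearMap.single R φ i))
  · intro i
    have hinj : Function.Injective (LinearMap.single R φ i) :=
      LinearMap.ker_eq_bot.mp (LinearMap.ker_single R φ i)
    exact IsSemisimpleModule.congr (LinearEquiv.ofInjective _ hinj).symm
  · exact LinearMap.iSup_range_single R φ

/-- Every simple module over a semisimple ring is projective. -/
lemma aux_projective_of_semisimple [IsSemisimpleRing R] [IsSimpleModule R M] :
    Module.Projective R M := by
  haveI : Nontrivial M := IsSimpleModule.nontrivial R M
  obtain ⟨m, hm⟩ := exists_ne (0 : M)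
  set π : R →ₗ[R] M := LinearMap.toSpanSingleton R M m with hπdef
  have hπ : Function.Surjective π := IsSimpleModule.toSpanSingleton_surjective R hm
  obtain ⟨q, hq⟩ := exists_isCompl (LinearMap.ker π)
  set g : q →ₗ[R] M := π.comp q.subtype with hgdef
  have hginj : Function.Injective g := by
    rw [← LinearMap.ker_eq_bot]
    ext x
    simp only [LinearMap.mem_ker, Submodule.mem_bot, hgdef, LinearMap.comp_apply,
      Submodule.coe_subtype]
    constructor
    · intro hx
      have h2 : (x : R) ∈ LinearMap.ker π ⊓ q := ⟨hx, x.2⟩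
      rw [hq.inf_eq_bot] at h2
      exact Subtype.ext h2
    · rintro rfl; simp
  have hgsurj : Function.Surjective g := by
    intro y
    obtain ⟨r, hr⟩ := hπ y
    have hmem : r ∈ LinearMap.ker π ⊔ q := by rw [hq.sup_eq_top]; trivial
    obtain ⟨a, ha, b, hb, rfl⟩ := Submodule.mem_sup.mp hmem
    refine ⟨⟨b, hb⟩, ?_⟩
    show π b = y
    rw [← hr, map_add, LinearMap.mem_ker.mp ha, zero_add]
  set e := LinearEquiv.ofBijective g ⟨hginj, hgsurj⟩ with hedef
  apply Module.Projective.of_split (q.subtype.comp e.symm.toLinearMap) π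
  ext x
  have h1 : π ((e.symm x : q) : R) = g (e.symm x) := rfl
  show π ((e.symm x : q) : R) = x
  rw [h1]; exact e.apply_symm_apply x

end Aux

noncomputable abbrev ExtGrp (Λ : Type u) [Ring Λ] (M N : ModuleCat.{u} Λ) (n : ℕ) :
    Type u :=
  ((Ext ℤ (ModuleCat.{u} Λ) n).obj (Opposite.op M)).obj N

theorem stmt7 (K : Type u) [Field K] (Λ : Type u) [Ring Λ] [Algebra K Λ]
    [FiniteDimensional K Λ]
    (S : Type u) [AddCommGroup S] [Module Λ S] [IsSimpleModule Λ S]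
    (hfaith : Module.annihilator Λ S = ⊥)
    (hext : Subsingleton
      (ExtGrp Λ (ModuleCat.of Λ (S × Λ)) (ModuleCat.of Λ (S × Λ)) 1)) :
    Module.Projective Λ S := by
  classical
  haveI : IsArtinian Λ Λ := isArtinian_of_tower K inferInstance
  -- find a finite set of elements of S whose annihilators intersect to ⊥
  set T : Set (Submodule Λ Λ) :=
    {N | ∃ t : Finset S, N = ⨅ s ∈ t, LinearMap.ker (LinearMap.toSpanSingleton Λ S s)}
  obtain ⟨N, ⟨t, rfl⟩, hmin⟩ := IsArtinian.set_has_minimal T ⟨⊤, ∅, by simp⟩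
  have hbot : (⨅ s ∈ t, LinearMap.ker (LinearMap.toSpanSingleton Λ S s)) = ⊥ := by
    by_contra h
    obtain ⟨r, hr, hr0⟩ := Submodule.exists_mem_ne_zero_of_ne_bot h
    have hann : r ∉ Module.annihilator Λ S := by rw [hfaith]; simpa using hr0
    rw [Module.mem_annihilator] at hann
    push_neg at hann
    obtain ⟨s, hs⟩ := hann
    have hlt : (⨅ x ∈ (insert s t : Finset S),
        LinearMap.ker (LinearMap.toSpanSingleton Λ S x)) <
        ⨅ x ∈ t, LinearMap.ker (LinearMap.toSpanSingleton Λ S x) := by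
      refine lt_of_le_of_ne (biInf_mono (fun x hx => Finset.mem_insert_of_mem hx)) ?_
      intro heq
      have hr' : r ∈ ⨅ x ∈ (insert s t : Finset S),
          LinearMap.ker (LinearMap.toSpanSingleton Λ S x) := heq ▸ hr
      have : r ∈ LinearMap.ker (LinearMap.toSpanSingleton Λ S s) := by
        exact (Submodule.mem_iInf _).mp ((Submodule.mem_iInf _).mp hr' s)
          (Finset.mem_insert_self s t)
      exact hs (by simpa [LinearMap.toSpanSingleton_apply] using this)
    exact hmin _ ⟨insert s t, rfl⟩ hlt
  -- embed Λ into a finite power of S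
  set f : Λ →ₗ[Λ] (t → S) :=
    LinearMap.pi (fun s => LinearMap.toSpanSingleton Λ S (s : S)) with hfdef
  have hfinj : Function.Injective f := by
    rw [← LinearMap.ker_eq_bot, eq_bot_iff]
    intro r hrk
    have h0 : f r = 0 := LinearMap.mem_ker.mp hrk
    rw [← hbot]
    rw [Submodule.mem_iInf]
    intro s
    rw [Submodule.mem_iInf]
    intro hst
    exact LinearMap.mem_ker.mpr (congrFun h0 ⟨s, hst⟩)
  haveI : IsSemisimpleModule Λ S := aux_simple_isSemisimple
  haveI : IsSemisimpleModule Λ (t → S) := aux_pi_isSemisimple _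
  haveI : IsSemisimpleRing Λ :=
    IsSemisimpleModule.congr (LinearEquiv.ofInjective f hfinj)
  exact aux_projective_of_semisimple
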